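/- For every φ ∈ ℝ with cos(φ/2) ≠ 0, the real 2×2 matrices V₀ = [[sin(φ/2), |cos(φ/2)|], [−cos(φ/2), sin φ/(2·|cos(φ/2)|)]] and V₁ = [[|cos(φ/2)|, sin(φ/2)], [sin φ/(2·|cos(φ/2)|), −cos(φ/2)]] are both unitary (viewed as complex matrices). -/

import Mathlib

open scoped Matrix

noncomputable def V0case2 (φ : ℝ) : Matrix (Fin 2) (Fin 2) ℂ :=
  !![(Real.sin (φ / 2) : ℂ), (|Real.cos (φ / 2)| : ℝ);
     -(Real.cos (φ / 2) : ℂ), ((Real.sin φ / (2 * |Real.cos (φ / 2)|) : ℝ) : ℂ)]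

noncomputable def V1case2 (φ : ℝ) : Matrix (Fin 2) (Fin 2) ℂ :=
  !![((|Real.cos (φ / 2)| : ℝ) : ℂ), (Real.sin (φ / 2) : ℂ);
     ((Real.sin φ / (2 * |Real.cos (φ / 2)|) : ℝ) : ℂ), -(Real.cos (φ / 2) : ℂ)]

set_option maxHeartbeats 1000000 in
theorem stmt9 (φ : ℝ) (hφ : Real.cos (φ / 2) ≠ 0) :
    (V0case2 φ * (V0case2 φ)ᴴ = 1 ∧ (V0case2 φ)ᴴ * V0case2 φ = 1) ∧
    (V1case2 φ * (V1case2 φ)ᴴ = 1 ∧ (V1case2 φ)ᴴ * V1case2 φ = 1) := by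
  set s := Real.sin (φ / 2) with hs
  set c := Real.cos (φ / 2) with hc
  have ha : |c| ≠ 0 := abs_ne_zero.mpr hφ
  have hsin : Real.sin φ = 2 * s * c := by
    rw [hs, hc, ← Real.sin_two_mul]; ring_nf
  have hb : Real.sin φ / (2 * |c|) = s * c / |c| := by
    rw [hsin]; field_simp
  have hba : s * c / |c| * |c| = s * c := div_mul_cancel₀ _ ha
  have hbb : (s * c / |c|) * (s * c / |c|) = s * s := by
    rw [div_mul_div_comm, abs_mul_abs_self]
    field_simp
  have hsc : s * s + c * c = 1 := by
    have := Real.sin_sq_add_cos_sq (φ / 2); nlinarith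
  have haa : |c| * |c| = c * c := abs_mul_abs_self c
  refine ⟨⟨?_, ?_⟩, ?_, ?_⟩ <;>
  · ext i j
    fin_cases i <;> fin_cases j <;>
      simp [V0case2, V1case2, Matrix.mul_apply, Fin.sum_univ_two,
        Matrix.conjTranspose_apply, Matrix.one_apply, hb, ← hs, ← hc,
        ← Complex.ofReal_neg, ← Complex.ofReal_mul, ← Complex.ofReal_add] <;>
      (try push_cast) <;> (try norm_cast) <;> nlinarith [hba, hbb, hsc, haa]
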